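/- Let G be a matching-covered graph with a separating facet-defining cut C, let B' ⊆ ℤ^E be an integral basis of lin(P(G;C)) consisting of incidence vectors of perfect matchings each meeting C once, and let M be a perfect matching with |M ∩ C| = 3. Then B := B' ∪ {1_M} is an integral basis of lin(P(G)): B is linearly independent and every z ∈ lin(P(G)) ∩ ℤ^E is an integer linear combination of B. In particular, the coefficient α_M of 1_M in the expansion of such z satisfies 2α_M = z(C) − c where c = z(δ(v)) for any vertex v, and z(C) ≡ c (mod 2). -/

import Mathlib

open Classical Finset

noncomputable section

namespace PaperPM

variable {V : Type} [Fintype V] [DecidableEq V]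

/-- `M` is (the edge set of) a perfect matching of `G`. -/
def IsPM (G : SimpleGraph V) (M : Finset (Sym2 V)) : Prop :=
  (M : Set (Sym2 V)) ⊆ G.edgeSet ∧ ∀ v : V, ∃! e, e ∈ M ∧ v ∈ e

/-- `G` is matching-covered: every edge lies in a perfect matching. -/
def MatchingCovered (G : SimpleGraph V) : Prop :=
  ∀ e ∈ G.edgeSet, ∃ M, IsPM G M ∧ e ∈ M

/-- incidence (indicator) vector of a set of edges -/
def indVec (M : Finset (Sym2 V)) : Sym2 V → ℝ := fun e => if e ∈ M then 1 else 0

/-- the perfect matching polytope of `G` -/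
def pmPolytope (G : SimpleGraph V) : Set (Sym2 V → ℝ) :=
  convexHull ℝ {x | ∃ M, IsPM G M ∧ x = indVec M}

/-- the cut `δ(X)`: edges of `G` with exactly one endpoint in `X` -/
def cutE (G : SimpleGraph V) (X : Set V) : Finset (Sym2 V) :=
  Finset.univ.filter fun e =>
    e ∈ G.edgeSet ∧ ∃ u v : V, e = s(u, v) ∧ u ∈ X ∧ v ∉ X

/-- `x(A) = Σ_{a ∈ A} x_a` -/
def edgeSum (x : Sym2 V → ℝ) (A : Finset (Sym2 V)) : ℝ := ∑ e ∈ A, x e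

/-- the face `P(G;C) = P(G) ∩ {x : x(δ(X)) = 1}` -/
def faceCut (G : SimpleGraph V) (X : Set V) : Set (Sym2 V → ℝ) :=
  {x ∈ pmPolytope G | edgeSum x (cutE G X) = 1}

/-- `δ(X)` is a tight cut -/
def TightCut (G : SimpleGraph V) (X : Set V) : Prop :=
  Odd X.toFinset.card ∧ 1 < X.toFinset.card ∧ X.toFinset.card < Fintype.card V - 1 ∧
    ∀ M, IsPM G M → (M ∩ cutE G X).card = 1

/-- a brick: non-bipartite matching-covered graph without tight cuts -/
def IsBrick (G : SimpleGraph V) : Prop :=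
  MatchingCovered G ∧ ¬ G.Colorable 2 ∧ ∀ X : Set V, ¬ TightCut G X

/-- dimension of a subset of `ℝ^{Sym2 V}` (affine dimension; `-1` for the empty set) -/
def polyDim (s : Set (Sym2 V → ℝ)) : ℤ :=
  if s = ∅ then -1 else (Module.finrank ℝ (vectorSpan ℝ s) : ℤ)

/-- number of bricks in a tight cut decomposition of `G`, via the dimension
formula `dim P(G) = |E| − |V| + 1 − b(G)` of Naddef and Edmonds–Pulleyblank–Lovász. -/
def brickCount (G : SimpleGraph V) : ℤ :=
  (G.edgeFinset.card : ℤ) - Fintype.card V + 1 - polyDim (pmPolytope G)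

/-- (the edge set of) a perfect matching of the contraction `G/X`, viewed inside `G`:
no edge inside `X`, exactly one cut edge (covering the contraction vertex), and every
vertex outside `X` covered exactly once. This keeps multiple parallel cut edges distinct. -/
def IsPMContr (G : SimpleGraph V) (X : Set V) (M : Finset (Sym2 V)) : Prop :=
  (M : Set (Sym2 V)) ⊆ G.edgeSet ∧ (∀ e ∈ M, ¬ ∀ v ∈ e, v ∈ X) ∧
    (M ∩ cutE G X).card = 1 ∧ ∀ v : V, v ∉ X → ∃! e, e ∈ M ∧ v ∈ e

/-- the contraction `G/X` is matching-covered (every one of its edges, i.e. every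
edge of `G` not inside `X`, lies in a perfect matching of `G/X`). -/
def MatchingCoveredContr (G : SimpleGraph V) (X : Set V) : Prop :=
  ∀ e ∈ G.edgeSet, (¬ ∀ v ∈ e, v ∈ X) → ∃ M, IsPMContr G X M ∧ e ∈ M

/-- `δ(X)` is a separating cut: odd, nontrivial, and both cut-contractions
`G/X` and `G/X̄` are matching-covered. -/
def SeparatingCut (G : SimpleGraph V) (X : Set V) : Prop :=
  Odd X.toFinset.card ∧ 1 < X.toFinset.card ∧ X.toFinset.card < Fintype.card V - 1 ∧
    MatchingCoveredContr G X ∧ MatchingCoveredContr G Xᶜ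

/-- the edges of the contraction `G/X`, as edges of `G` -/
def contrEdges (G : SimpleGraph V) (X : Set V) : Finset (Sym2 V) :=
  G.edgeFinset.filter fun e => ¬ ∀ v ∈ e, v ∈ X

/-- the perfect matching polytope of the contraction `G/X`, in the coordinates of `G` -/
def contrPolytope (G : SimpleGraph V) (X : Set V) : Set (Sym2 V → ℝ) :=
  convexHull ℝ {x | ∃ M, IsPMContr G X M ∧ x = indVec M}

/-- number of bricks of the contraction `G/X`, via the dimension formula -/
def brickCountContr (G : SimpleGraph V) (X : Set V) : ℤ :=
  (contrEdges G X).card - ((Fintype.card V - X.toFinset.card : ℕ) + 1) + 1 -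
    polyDim (contrPolytope G X)

/-- the contraction `G/X` is a Birkhoff–von Neumann graph: its perfect matching
polytope is cut out by nonnegativity, the degree equations, and `x(δ(X)) = 1`. -/
def BvNContr (G : SimpleGraph V) (X : Set V) : Prop :=
  contrPolytope G X =
    {x | (∀ e, 0 ≤ x e) ∧ (∀ e : Sym2 V, (e ∉ G.edgeSet ∨ ∀ v ∈ e, v ∈ X) → x e = 0) ∧
      (∀ v : V, v ∉ X → edgeSum x (cutE G {v}) = 1) ∧ edgeSum x (cutE G X) = 1}

/-- the contraction `G/X` is bipartite -/
def ContrBipartite (G : SimpleGraph V) (X : Set V) : Prop :=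
  ∃ (c : V → Bool) (b : Bool), ∀ u v : V, G.Adj u v → (u ∉ X ∨ v ∉ X) →
    (if u ∈ X then b else c u) ≠ (if v ∈ X then b else c v)

/-- `G` is a Birkhoff–von Neumann graph -/
def BvN (G : SimpleGraph V) : Prop :=
  pmPolytope G =
    {x | (∀ e, 0 ≤ x e) ∧ (∀ e : Sym2 V, e ∉ G.edgeSet → x e = 0) ∧
      ∀ v : V, edgeSum x (cutE G {v}) = 1}

/-- `F` is a face of the convex set `P` -/
def IsFaceOf {E : Type*} [AddCommGroup E] [Module ℝ E] (P F : Set E) : Prop :=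
  F ⊆ P ∧ Convex ℝ F ∧ ∀ x ∈ P, ∀ y ∈ P, ∀ t : ℝ, 0 < t → t < 1 →
    t • x + (1 - t) • y ∈ F → x ∈ F ∧ y ∈ F

/-- a vector is integral if all its coordinates are integers -/
def Integral (x : Sym2 V → ℝ) : Prop := ∀ e, ∃ n : ℤ, x e = (n : ℝ)

/-- the Petersen graph, as the Kneser graph `K(5,2)` -/
def petersenGraph : SimpleGraph {s : Finset (Fin 5) // s.card = 2} where
  Adj a b := Disjoint (a : Finset (Fin 5)) (b : Finset (Fin 5))
  symm := ⟨fun _ _ h => h.symm⟩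
  loopless := ⟨fun a h => by
    have h0 : (a : Finset (Fin 5)) = ∅ := by
      rw [← Finset.bot_eq_empty]
      exact disjoint_self.mp h
    have h2 := a.2
    rw [h0] at h2
    simp at h2⟩


/-- edge sum as a linear map -/
def edgeLM (A : Finset (Sym2 V)) : (Sym2 V → ℝ) →ₗ[ℝ] ℝ where
  toFun x := edgeSum x A
  map_add' x y := by simp [edgeSum, Finset.sum_add_distrib]
  map_smul' c x := by simp [edgeSum, Finset.mul_sum]

lemma edgeSum_indVec (N A : Finset (Sym2 V)) :
    edgeSum (indVec N) A = ((N ∩ A).card : ℝ) := by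
  classical
  simp only [edgeSum, indVec]
  rw [Finset.sum_ite, Finset.sum_const, Finset.sum_const_zero, add_zero, nsmul_eq_mul, mul_one]
  congr 2
  rw [Finset.inter_comm]
  ext e; simp [Finset.mem_filter, Finset.mem_inter]

lemma mem_cutE {G : SimpleGraph V} {X : Set V} {e : Sym2 V} :
    e ∈ cutE G X ↔ e ∈ G.edgeSet ∧ ∃ u v : V, e = s(u, v) ∧ u ∈ X ∧ v ∉ X := by
  simp [cutE]

lemma cutE_subset_edgeFinset (G : SimpleGraph V) (X : Set V) :
    cutE G X ⊆ G.edgeFinset := by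
  intro e he
  rw [SimpleGraph.mem_edgeFinset]
  exact (mem_cutE.1 he).1

lemma mem_cutE_singleton {G : SimpleGraph V} {v : V} {e : Sym2 V} :
    e ∈ cutE G {v} ↔ e ∈ G.edgeSet ∧ v ∈ e := by
  rw [mem_cutE]
  constructor
  · rintro ⟨he, u, w, rfl, hu, hw⟩
    rw [Set.mem_singleton_iff] at hu
    exact ⟨he, by simp [hu]⟩
  · rintro ⟨he, hv⟩
    refine ⟨he, ?_⟩
    induction e with
    | _ a b =>
      have hab : G.Adj a b := he
      rcases Sym2.mem_iff.1 hv with rfl | rfl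
      · exact ⟨v, b, rfl, rfl, fun h => hab.ne (Set.mem_singleton_iff.1 h).symm⟩
      · exact ⟨v, a, Sym2.eq_swap, rfl, fun h => hab.ne' (Set.mem_singleton_iff.1 h).symm⟩

lemma IsPM.card_cut_singleton {G : SimpleGraph V} {N : Finset (Sym2 V)}
    (hN : IsPM G N) (v : V) : (N ∩ cutE G {v}).card = 1 := by
  classical
  obtain ⟨e₀, ⟨he₀N, he₀v⟩, huniq⟩ := hN.2 v
  rw [Finset.card_eq_one]
  refine ⟨e₀, ?_⟩
  ext f
  simp only [Finset.mem_inter, Finset.mem_singleton]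
  constructor
  · rintro ⟨hfN, hfc⟩
    exact huniq f ⟨hfN, (mem_cutE_singleton.1 hfc).2⟩
  · rintro rfl
    exact ⟨he₀N, mem_cutE_singleton.2 ⟨hN.1 he₀N, he₀v⟩⟩
set_option linter.unusedSectionVars false

lemma span_convexHull (s : Set (Sym2 V → ℝ)) :
    Submodule.span ℝ (convexHull ℝ s) = Submodule.span ℝ s := by
  refine le_antisymm (Submodule.span_le.2 ?_) (Submodule.span_mono (subset_convexHull ℝ s))
  exact convexHull_min Submodule.subset_span (Submodule.span ℝ s).convex

/-- generators of the PM polytope -/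
def pmGens (G : SimpleGraph V) : Set (Sym2 V → ℝ) := {x | ∃ M, IsPM G M ∧ x = indVec M}

lemma span_pmPolytope (G : SimpleGraph V) :
    Submodule.span ℝ (pmPolytope G) = Submodule.span ℝ (pmGens G) :=
  span_convexHull _

lemma edgeLM_apply (A : Finset (Sym2 V)) (x : Sym2 V → ℝ) : edgeLM A x = edgeSum x A := rfl

/-- a linear functional vanishing on all PM indicators vanishes on `span (pmPolytope G)` -/
lemma vanish_on_span (G : SimpleGraph V) (f : (Sym2 V → ℝ) →ₗ[ℝ] ℝ)
    (hf : ∀ N, IsPM G N → f (indVec N) = 0) {z : Sym2 V → ℝ}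
    (hz : z ∈ Submodule.span ℝ (pmPolytope G)) : f z = 0 := by
  rw [span_pmPolytope] at hz
  have : Submodule.span ℝ (pmGens G) ≤ LinearMap.ker f := by
    rw [Submodule.span_le]
    rintro x ⟨N, hN, rfl⟩
    exact hf N hN
  exact this hz

lemma degree_const (G : SimpleGraph V) {z : Sym2 V → ℝ}
    (hz : z ∈ Submodule.span ℝ (pmPolytope G)) (u v : V) :
    edgeSum z (cutE G {u}) = edgeSum z (cutE G {v}) := by
  have h := vanish_on_span G (edgeLM (cutE G {u}) - edgeLM (cutE G {v})) ?_ hz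
  · simpa [sub_eq_zero, edgeLM_apply] using h
  · intro N hN
    simp [edgeLM_apply, edgeSum_indVec, hN.card_cut_singleton]

lemma integral_edgeSum {z : Sym2 V → ℝ} (hz : Integral z) (A : Finset (Sym2 V)) :
    ∃ k : ℤ, edgeSum z A = (k : ℝ) := by
  refine ⟨∑ e ∈ A, (hz e).choose, ?_⟩
  rw [edgeSum]
  push_cast
  exact Finset.sum_congr rfl fun e _ => (hz e).choose_spec

/-- the double-counting identity -/
lemma counting (G : SimpleGraph V) (X : Set V) (z : Sym2 V → ℝ) :
    ∑ u ∈ X.toFinset, edgeSum z (cutE G {u}) =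
      edgeSum z (cutE G X) +
        2 * edgeSum z (G.edgeFinset.filter fun e => ∀ v ∈ e, v ∈ X) := by
  classical
  have step1 : ∀ u : V, edgeSum z (cutE G {u}) =
      ∑ e ∈ G.edgeFinset, if u ∈ e then z e else 0 := by
    intro u
    rw [edgeSum, ← Finset.sum_filter]
    congr 1
    ext e
    simp only [Finset.mem_filter, SimpleGraph.mem_edgeFinset, mem_cutE_singleton]
  have step3 : ∀ e ∈ G.edgeFinset,
      ((X.toFinset.filter (· ∈ e)).card : ℝ) * z e =
        (if e ∈ cutE G X then z e else 0) +
          2 * (if (∀ v ∈ e, v ∈ X) then z e else 0) := by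
    intro e he
    rw [SimpleGraph.mem_edgeFinset] at he
    induction e with
    | _ a b =>
      have hab : G.Adj a b := he
      have hne : a ≠ b := hab.ne
      have hfil : X.toFinset.filter (· ∈ s(a, b)) = X.toFinset ∩ {a, b} := by
        ext u; simp [Sym2.mem_iff, Finset.mem_inter]
      have hall : (∀ v ∈ s(a, b), v ∈ X) ↔ a ∈ X ∧ b ∈ X := by
        constructor
        · intro h; exact ⟨h a (by simp), h b (by simp)⟩
        · rintro ⟨ha, hb⟩ v hv
          rcases Sym2.mem_iff.1 hv with rfl | rfl <;> assumption
      have hcut : s(a, b) ∈ cutE G X ↔ ((a ∈ X ∧ b ∉ X) ∨ (b ∈ X ∧ a ∉ X)) := by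
        rw [mem_cutE]
        constructor
        · rintro ⟨-, u, v, huv, hu, hv⟩
          rcases Sym2.eq_iff.1 huv with ⟨rfl, rfl⟩ | ⟨rfl, rfl⟩
          · exact Or.inl ⟨hu, hv⟩
          · exact Or.inr ⟨hu, hv⟩
        · rintro (⟨ha, hb⟩ | ⟨hb, ha⟩)
          · exact ⟨he, a, b, rfl, ha, hb⟩
          · exact ⟨he, b, a, Sym2.eq_swap, hb, ha⟩
      rw [hfil]
      by_cases ha : a ∈ X <;> by_cases hb : b ∈ X
      · have : X.toFinset ∩ {a, b} = {a, b} := by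
          rw [Finset.inter_eq_right]
          intro u hu
          rcases Finset.mem_insert.1 hu with rfl | hu
          · simpa using ha
          · rw [Finset.mem_singleton] at hu; subst hu; simpa using hb
        rw [this, if_neg (by rw [hcut]; tauto), if_pos (hall.2 ⟨ha, hb⟩)]
        rw [Finset.card_insert_of_notMem (by simp [hne]), Finset.card_singleton]
        push_cast; ring
      · have : X.toFinset ∩ {a, b} = {a} := by
          ext u
          simp only [Finset.mem_inter, Finset.mem_insert, Finset.mem_singleton,
            Set.mem_toFinset]
          constructor
          · rintro ⟨hu, rfl | rfl⟩
            · rfl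
            · exact absurd hu hb
          · rintro rfl; exact ⟨ha, Or.inl rfl⟩
        rw [this, if_pos (hcut.2 (Or.inl ⟨ha, hb⟩)), if_neg (by rw [hall]; tauto)]
        simp
      · have : X.toFinset ∩ {a, b} = {b} := by
          ext u
          simp only [Finset.mem_inter, Finset.mem_insert, Finset.mem_singleton,
            Set.mem_toFinset]
          constructor
          · rintro ⟨hu, rfl | rfl⟩
            · exact absurd hu ha
            · rfl
          · rintro rfl; exact ⟨hb, Or.inr rfl⟩
        rw [this, if_pos (hcut.2 (Or.inr ⟨hb, ha⟩)), if_neg (by rw [hall]; tauto)]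
        simp
      · have : X.toFinset ∩ {a, b} = ∅ := by
          ext u
          simp only [Finset.mem_inter, Finset.mem_insert, Finset.mem_singleton,
            Set.mem_toFinset, Finset.notMem_empty, iff_false, not_and]
          rintro hu (rfl | rfl) <;> [exact ha hu; exact hb hu]
        rw [this, if_neg (by rw [hcut]; tauto), if_neg (by rw [hall]; tauto)]
        simp
  calc ∑ u ∈ X.toFinset, edgeSum z (cutE G {u})
      = ∑ u ∈ X.toFinset, ∑ e ∈ G.edgeFinset, if u ∈ e then z e else 0 := by
        exact Finset.sum_congr rfl fun u _ => step1 u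
    _ = ∑ e ∈ G.edgeFinset, ∑ u ∈ X.toFinset, if u ∈ e then z e else 0 :=
        Finset.sum_comm
    _ = ∑ e ∈ G.edgeFinset, ((X.toFinset.filter (· ∈ e)).card : ℝ) * z e := by
        refine Finset.sum_congr rfl fun e _ => ?_
        rw [Finset.sum_ite, Finset.sum_const, Finset.sum_const_zero, add_zero,
          nsmul_eq_mul]
    _ = ∑ e ∈ G.edgeFinset, ((if e ∈ cutE G X then z e else 0) +
          2 * (if (∀ v ∈ e, v ∈ X) then z e else 0)) :=
        Finset.sum_congr rfl step3
    _ = edgeSum z (cutE G X) +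
          2 * edgeSum z (G.edgeFinset.filter fun e => ∀ v ∈ e, v ∈ X) := by
        rw [Finset.sum_add_distrib, ← Finset.mul_sum]
        congr 1
        · rw [Finset.sum_ite_mem,
            Finset.inter_eq_right.2 (cutE_subset_edgeFinset G X)]
          rfl
        · rw [edgeSum, Finset.sum_filter]
lemma parity_lemma (G : SimpleGraph V) (X : Set V) (hodd : Odd X.toFinset.card)
    {z : Sym2 V → ℝ} (hz : z ∈ Submodule.span ℝ (pmPolytope G)) (hzi : Integral z)
    (v : V) :
    ∃ m : ℤ, edgeSum z (cutE G X) - edgeSum z (cutE G {v}) = 2 * (m : ℝ) := by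
  classical
  obtain ⟨t, ht⟩ := hodd
  obtain ⟨k, hk⟩ := integral_edgeSum hzi (cutE G {v})
  obtain ⟨j, hj⟩ := integral_edgeSum hzi (G.edgeFinset.filter fun e => ∀ u ∈ e, u ∈ X)
  have hcount := counting G X z
  have hconst : ∀ u ∈ X.toFinset, edgeSum z (cutE G {u}) = edgeSum z (cutE G {v}) :=
    fun u _ => degree_const G hz u v
  rw [Finset.sum_congr rfl hconst, Finset.sum_const, nsmul_eq_mul, ht] at hcount
  refine ⟨t * k - j, ?_⟩
  have : edgeSum z (cutE G X) = (2 * t + 1 : ℕ) * (k : ℝ) - 2 * (j : ℝ) := by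
    rw [← hk, ← hj]; linarith [hcount]
  rw [this, hk]
  push_cast
  ring

/-- dimension of the span of a nonempty set inside an affine hyperplane `f = 1` -/
lemma finrank_span_hyperplane (f : (Sym2 V → ℝ) →ₗ[ℝ] ℝ) (S : Set (Sym2 V → ℝ))
    (hS : ∀ x ∈ S, f x = 1) {x₀ : Sym2 V → ℝ} (hx₀ : x₀ ∈ S) :
    Module.finrank ℝ (Submodule.span ℝ S) =
      Module.finrank ℝ (vectorSpan ℝ S) + 1 := by
  classical
  have hvs_le : vectorSpan ℝ S ≤ LinearMap.ker f := by
    rw [vectorSpan_def, Submodule.span_le]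
    rintro y ⟨a, ha, b, hb, rfl⟩
    simp [vsub_eq_sub, hS a ha, hS b hb]
  have key1 : Submodule.span ℝ S = vectorSpan ℝ S ⊔ Submodule.span ℝ {x₀} := by
    refine le_antisymm (Submodule.span_le.2 fun x hx => ?_) (sup_le ?_ ?_)
    · have h1 : x - x₀ ∈ vectorSpan ℝ S := by
        rw [vectorSpan_def]
        exact Submodule.subset_span (by
          rw [show x - x₀ = x -ᵥ x₀ from rfl]
          exact Set.vsub_mem_vsub hx hx₀)
      have : x = (x - x₀) + x₀ := by ring
      rw [this]
      exact Submodule.add_mem _ (Submodule.mem_sup_left h1)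
        (Submodule.mem_sup_right (Submodule.subset_span rfl))
    · rw [vectorSpan_def, Submodule.span_le]
      rintro y ⟨a, ha, b, hb, rfl⟩
      exact Submodule.sub_mem _ (Submodule.subset_span ha) (Submodule.subset_span hb)
    · rw [Submodule.span_le, Set.singleton_subset_iff]
      exact Submodule.subset_span hx₀
  have key2 : vectorSpan ℝ S ⊓ Submodule.span ℝ {x₀} = ⊥ := by
    rw [eq_bot_iff]
    rintro y ⟨hy1, hy2⟩
    obtain ⟨c, rfl⟩ := Submodule.mem_span_singleton.1 hy2
    have : f (c • x₀) = 0 := hvs_le hy1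
    rw [map_smul, hS x₀ hx₀, smul_eq_mul, mul_one] at this
    simp [this]
  have hx₀ne : x₀ ≠ 0 := by
    intro h
    have h1 := hS x₀ hx₀
    rw [h, map_zero] at h1
    exact one_ne_zero h1.symm
  rw [key1]
  have := Submodule.finrank_sup_add_finrank_inf_eq (vectorSpan ℝ S)
    (Submodule.span ℝ {x₀})
  rw [key2] at this
  have h1 : Module.finrank ℝ (Submodule.span ℝ ({x₀} : Set (Sym2 V → ℝ))) = 1 :=
    finrank_span_singleton hx₀ne
  simp only [finrank_bot, add_zero] at this
  omega
lemma sub_edgeLM_apply (A B : Finset (Sym2 V)) (x : Sym2 V → ℝ) :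
    (edgeLM A - edgeLM B) x = edgeSum x A - edgeSum x B := rfl


/-- extending an integral basis of `lin P(G;C)` (made of perfect
matchings meeting the separating facet-defining cut `C` once) by a perfect matching
`M` with `|M ∩ C| = 3` gives an integral basis of `lin P(G)`; moreover, the
coefficient `α` of `1_M` in the expansion of an integral `z ∈ lin P(G)` satisfies
`2α = z(C) − c` with `c = z(δ(v))`, and `z(C) ≡ c (mod 2)`. -/
theorem stmt17 (G : SimpleGraph V) (hG : MatchingCovered G) (X : Set V)
    (hsep : SeparatingCut G X)
    (hfacet : polyDim (faceCut G X) = polyDim (pmPolytope G) - 1)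
    (B' : Set (Sym2 V → ℝ))
    (hB'pm : ∀ b ∈ B', ∃ N, IsPM G N ∧ (N ∩ cutE G X).card = 1 ∧ b = indVec N)
    (hB'li : LinearIndependent ℝ (fun b : B' => (b : Sym2 V → ℝ)))
    (hB'span : Submodule.span ℝ B' = Submodule.span ℝ (faceCut G X))
    (hB'int : ∀ z, z ∈ Submodule.span ℝ B' → Integral z → z ∈ Submodule.span ℤ B')
    (M : Finset (Sym2 V)) (hM : IsPM G M) (hM3 : (M ∩ cutE G X).card = 3) :
    LinearIndependent ℝ
      (fun b : (insert (indVec M) B' : Set (Sym2 V → ℝ)) => (b : Sym2 V → ℝ)) ∧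
    Submodule.span ℝ (insert (indVec M) B') = Submodule.span ℝ (pmPolytope G) ∧
    (∀ z, z ∈ Submodule.span ℝ (pmPolytope G) → Integral z →
      z ∈ Submodule.span ℤ (insert (indVec M) B')) ∧
    ∀ z, z ∈ Submodule.span ℝ (pmPolytope G) → Integral z →
      ∀ (α : ℝ) (w : Sym2 V → ℝ), w ∈ Submodule.span ℝ B' → z = α • indVec M + w →
        (∀ v : V, 2 * α = edgeSum z (cutE G X) - edgeSum z (cutE G {v})) ∧
        (∃ m : ℤ, α = (m : ℝ)) ∧
        (∀ v : V, ∃ m : ℤ,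
          edgeSum z (cutE G X) - edgeSum z (cutE G {v}) = 2 * (m : ℝ)) := by
  classical
  obtain ⟨hodd, hcard1, hcard2, hcovX, hcovXc⟩ := hsep
  obtain ⟨v₀, hv₀⟩ : X.toFinset.Nonempty := Finset.card_pos.1 (by omega)
  set C := cutE G X with hC
  -- the functionals vanish on span B'
  have hfB' : ∀ v : V, ∀ w ∈ Submodule.span ℝ B',
      edgeSum w C - edgeSum w (cutE G {v}) = 0 := by
    intro v w hw
    have hker : Submodule.span ℝ B' ≤
        LinearMap.ker (edgeLM C - edgeLM (cutE G {v})) := by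
      rw [Submodule.span_le]
      intro b hb
      obtain ⟨N, hN, hN1, rfl⟩ := hB'pm b hb
      rw [SetLike.mem_coe, LinearMap.mem_ker, sub_edgeLM_apply, edgeSum_indVec,
        edgeSum_indVec, hN1, hN.card_cut_singleton v]
      norm_num
    have := hker hw
    rwa [LinearMap.mem_ker, sub_edgeLM_apply] at this
  have hfM : ∀ v : V,
      edgeSum (indVec M) C - edgeSum (indVec M) (cutE G {v}) = 2 := by
    intro v
    rw [edgeSum_indVec, edgeSum_indVec, hM3, hM.card_cut_singleton v]
    norm_num
  have hMnotin : indVec M ∉ Submodule.span ℝ B' := by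
    intro h
    have h0 := hfB' v₀ _ h
    rw [hfM v₀] at h0
    norm_num at h0
  have hMne : indVec M ≠ 0 := by
    intro h
    have := hfM v₀
    rw [h] at this
    simp [edgeSum] at this
  have hMpm : indVec M ∈ pmPolytope G := subset_convexHull ℝ _ ⟨M, hM, rfl⟩
  -- Part 1
  have part1 := LinearIndepOn.id_insert (s := B') hB'li hMnotin
  -- Part 2
  have hUle : Submodule.span ℝ (insert (indVec M) B') ≤
      Submodule.span ℝ (pmPolytope G) := by
    rw [Submodule.span_le]
    rintro x (rfl | hx)
    · exact Submodule.subset_span hMpm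
    · have h1 : x ∈ Submodule.span ℝ B' := Submodule.subset_span hx
      rw [hB'span] at h1
      exact Submodule.span_mono (fun y hy => hy.1) h1
  have part2 : Submodule.span ℝ (insert (indVec M) B') =
      Submodule.span ℝ (pmPolytope G) := by
    rcases Set.eq_empty_or_nonempty B' with hB'e | ⟨b₀, hb₀⟩
    · -- degenerate case: B' empty, pm polytope is a point
      subst hB'e
      have hfc : Submodule.span ℝ (faceCut G X) = ⊥ := by
        rw [← hB'span, Submodule.span_empty]
      have hfce : faceCut G X = ∅ := by
        rw [Set.eq_empty_iff_forall_notMem]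
        intro x hx
        have hx0 : x = 0 := by
          have := Submodule.subset_span (R := ℝ) hx
          rw [hfc] at this
          simpa using this
        have := hx.2
        rw [hx0] at this
        simp [edgeSum] at this
      rw [polyDim, if_pos hfce] at hfacet
      have hpne : pmPolytope G ≠ ∅ := by
        intro h
        rw [polyDim, if_pos h] at hfacet
        omega
      rw [polyDim, if_neg hpne] at hfacet
      have hvs0 : Module.finrank ℝ (vectorSpan ℝ (pmPolytope G)) = 0 := by omega
      have hvsb : vectorSpan ℝ (pmPolytope G) = ⊥ := Submodule.finrank_eq_zero.1 hvs0
      have hsub : ∀ x ∈ pmPolytope G, x = indVec M := by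
        intro x hx
        have : x - indVec M ∈ vectorSpan ℝ (pmPolytope G) := by
          rw [vectorSpan_def]
          exact Submodule.subset_span (Set.vsub_mem_vsub hx hMpm)
        rw [hvsb, Submodule.mem_bot, sub_eq_zero] at this
        exact this
      refine le_antisymm hUle (Submodule.span_le.2 fun x hx => ?_)
      rw [hsub x hx]
      exact Submodule.subset_span (Set.mem_insert _ _)
    · -- main case
      obtain ⟨N₀, hN₀, hN₀1, rfl⟩ := hB'pm b₀ hb₀
      have hb₀pm : indVec N₀ ∈ pmPolytope G := subset_convexHull ℝ _ ⟨N₀, hN₀, rfl⟩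
      have hb₀fc : indVec N₀ ∈ faceCut G X :=
        ⟨hb₀pm, by rw [edgeSum_indVec, hN₀1]; norm_num⟩
      -- everything lies on the hyperplane f₀ = 1
      set f₀ := edgeLM (cutE G {v₀}) with hf₀
      have hpmH : ∀ x ∈ pmPolytope G, f₀ x = 1 := by
        intro x hx
        have hconv : Convex ℝ {y : Sym2 V → ℝ | f₀ y = 1} := convex_hyperplane f₀.isLinear 1
        have : pmPolytope G ⊆ {y | f₀ y = 1} := by
          refine convexHull_min ?_ hconv
          rintro y ⟨N, hN, rfl⟩
          show f₀ (indVec N) = 1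
          rw [hf₀, edgeLM_apply, edgeSum_indVec, hN.card_cut_singleton v₀]
          norm_num
        exact this hx
      have hfcH : ∀ x ∈ faceCut G X, f₀ x = 1 := fun x hx => hpmH x hx.1
      have hdimF := finrank_span_hyperplane f₀ (faceCut G X) hfcH hb₀fc
      have hdimP := finrank_span_hyperplane f₀ (pmPolytope G) hpmH hMpm
      have hfcne : faceCut G X ≠ ∅ := Set.nonempty_iff_ne_empty.1 ⟨_, hb₀fc⟩
      have hpne : pmPolytope G ≠ ∅ := Set.nonempty_iff_ne_empty.1 ⟨_, hMpm⟩
      rw [polyDim, if_neg hfcne, polyDim, if_neg hpne] at hfacet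
      have hPF : Module.finrank ℝ (vectorSpan ℝ (pmPolytope G)) =
          Module.finrank ℝ (vectorSpan ℝ (faceCut G X)) + 1 := by omega
      -- dimension of the extended span
      have hinf : Submodule.span ℝ {indVec M} ⊓ Submodule.span ℝ B' = ⊥ := by
        rw [eq_bot_iff]
        rintro y ⟨hy1, hy2⟩
        obtain ⟨c, rfl⟩ := Submodule.mem_span_singleton.1 hy1
        rcases eq_or_ne c 0 with rfl | hc
        · simp
        · exfalso
          apply hMnotin
          have : indVec M = c⁻¹ • (c • indVec M) := by
            rw [smul_smul, inv_mul_cancel₀ hc, one_smul]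
          rw [this]
          exact Submodule.smul_mem _ _ hy2
      have hdimU : Module.finrank ℝ
          (Submodule.span ℝ (insert (indVec M) B')) =
            Module.finrank ℝ (Submodule.span ℝ B') + 1 := by
        rw [Submodule.span_insert]
        have h1 := Submodule.finrank_sup_add_finrank_inf_eq
          (Submodule.span ℝ {indVec M}) (Submodule.span ℝ B')
        rw [hinf, finrank_span_singleton hMne] at h1
        simp only [finrank_bot, add_zero] at h1
        omega
      refine Submodule.eq_of_le_of_finrank_le hUle (le_of_eq ?_)
      rw [hdimU, hB'span, hdimF, hdimP, hPF]
  refine ⟨part1, part2, ?_, ?_⟩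
  · -- Part 3: integral decomposition
    intro z hz hzi
    obtain ⟨m, hm⟩ := parity_lemma G X hodd hz hzi v₀
    have hz' : z ∈ Submodule.span ℝ (insert (indVec M) B') := by rw [part2]; exact hz
    obtain ⟨β, u, hu, hzdec⟩ := Submodule.mem_span_insert.1 hz'
    have hfz : edgeSum z C - edgeSum z (cutE G {v₀}) = 2 * β := by
      have : (edgeLM C - edgeLM (cutE G {v₀})) z = 2 * β := by
        rw [hzdec, map_add, map_smul, smul_eq_mul, sub_edgeLM_apply,
          sub_edgeLM_apply, hfM v₀, hfB' v₀ u hu]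
        ring
      rw [← sub_edgeLM_apply]
      exact this
    have hβ : β = (m : ℝ) := by
      rw [hm] at hfz
      linarith
    subst hβ
    have huInt : Integral u := by
      intro e
      obtain ⟨n, hn⟩ := hzi e
      have : u e = z e - (m : ℝ) * indVec M e := by
        rw [hzdec]; simp only [Pi.add_apply, Pi.smul_apply, smul_eq_mul]; ring
      by_cases heM : e ∈ M
      · exact ⟨n - m, by rw [this, hn, indVec, if_pos heM]; push_cast; ring⟩
      · exact ⟨n, by rw [this, hn, indVec, if_neg heM]; push_cast; ring⟩
    have huZ : u ∈ Submodule.span ℤ B' := hB'int u hu huInt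
    rw [hzdec]
    refine Submodule.add_mem _ ?_ ?_
    · rw [Int.cast_smul_eq_zsmul ℝ m (indVec M)]
      exact Submodule.smul_mem _ _ (Submodule.subset_span (Set.mem_insert _ _))
    · exact Submodule.span_mono (Set.subset_insert _ _) huZ
  · -- Part 4: coefficient formulas
    intro z hz hzi α w hw hzw
    have bullet1 : ∀ v : V,
        2 * α = edgeSum z C - edgeSum z (cutE G {v}) := by
      intro v
      have : (edgeLM C - edgeLM (cutE G {v})) z = 2 * α := by
        rw [hzw, map_add, map_smul, smul_eq_mul, sub_edgeLM_apply,
          sub_edgeLM_apply, hfM v, hfB' v w hw]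
        ring
      rw [← sub_edgeLM_apply]
      exact this.symm
    have bullet3 : ∀ v : V, ∃ m : ℤ,
        edgeSum z C - edgeSum z (cutE G {v}) = 2 * (m : ℝ) :=
      fun v => parity_lemma G X hodd hz hzi v
    refine ⟨bullet1, ?_, bullet3⟩
    obtain ⟨m, hm⟩ := bullet3 v₀
    refine ⟨m, ?_⟩
    have := bullet1 v₀
    rw [hm] at this
    linarith

end PaperPM
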